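/- For every ε ∈ (0,1/4), every h ∈ 𝓗_ε and every u ∈ ℝ, (ẖ_ε * κ_{ε²})(u) − ∫_{|v|≥ε} ẖ_ε(u−v)·κ_{ε²}(v) dv ≤ h(u) ≤ (1+4ε)·(h̄_ε * κ_{ε²})(u). -/

import Mathlib

open Finset Filter Real Topology MeasureTheory

namespace CLLT

variable {X : Type*}

/-- Product of the transition weights along a path. -/
noncomputable def wt (P : X → X → ℝ) : X → List X → ℝ
  | _, [] => 1
  | x, y :: ys => P x y * wt P y ys

/-- Extension of a finite path `X₁, …, Xₙ` to a trajectory `ℕ → X` with `X₀ = x`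
(values beyond time `n` are irrelevant and set to `x`). -/
def pathExt (x : X) {n : ℕ} (path : Fin n → X) : ℕ → X := fun k =>
  if h : 1 ≤ k ∧ k ≤ n then path ⟨k - 1, by omega⟩ else x

/-- Expectation `𝔼_x (F (X₀, X₁, …))` of a functional of the first `n` steps of the
Markov chain with transition kernel `P` started at `X₀ = x`. -/
noncomputable def Ex [Fintype X] (P : X → X → ℝ) (x : X) (n : ℕ)
    (F : (ℕ → X) → ℝ) : ℝ :=
  ∑ path : Fin n → X, wt P x (List.ofFn path) * F (pathExt x path)

open Classical in
/-- Real-valued indicator of a proposition. -/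
noncomputable def ind (p : Prop) : ℝ := if p then 1 else 0

/-- Partial sum `S_k = f(X₁) + ⋯ + f(X_k)` along a trajectory. -/
noncomputable def Spath (f : X → ℝ) (ω : ℕ → X) (k : ℕ) : ℝ :=
  ∑ i ∈ Finset.Icc 1 k, f (ω i)

/-- The event `τ_y > n`, i.e. `y + S_k > 0` for all `k = 1, …, n`. -/
def survives (f : X → ℝ) (y : ℝ) (n : ℕ) (ω : ℕ → X) : Prop :=
  ∀ k ∈ Finset.Icc 1 n, 0 < y + Spath f ω k

/-- `n`-step transition kernel. -/
noncomputable def kpow [Fintype X] [DecidableEq X] (P : X → X → ℝ) : ℕ → X → X → ℝ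
  | 0 => fun x x' => if x = x' then 1 else 0
  | n + 1 => fun x x' => ∑ y, P x y * kpow P n y x'

/-- Transition operator acting on functions. -/
noncomputable def Pop [Fintype X] (P : X → X → ℝ) (g : X → ℝ) (x : X) : ℝ :=
  ∑ x', P x x' * g x'

/-- Asymptotic variance `σ² = ν(f²) + 2 ∑_{n ≥ 1} ν(f ⬝ Pⁿ f)`. -/
noncomputable def sigma2 [Fintype X] (P : X → X → ℝ) (ν f : X → ℝ) : ℝ :=
  (∑ x, f x ^ 2 * ν x) + 2 * ∑' n : ℕ, ∑ x, f x * ((Pop P)^[n + 1] f) x * ν x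

/-- Hypothesis 1 (primitivity). -/
def Primitive [Fintype X] [DecidableEq X] (P : X → X → ℝ) : Prop :=
  ∃ k₀ : ℕ, 1 ≤ k₀ ∧ ∀ x x', 0 < kpow P k₀ x x'

/-- Hypothesis 3 (non-lattice condition). -/
def NonLattice [Fintype X] (P : X → X → ℝ) (f : X → ℝ) : Prop :=
  ∀ θ a : ℝ, ∃ (n : ℕ) (g : Fin (n + 1) → X),
    (0 < ∏ i : Fin (n + 1), P (g i) (g (i + 1))) ∧
    ∀ m : ℤ, (∑ i, f (g i)) - (n + 1 : ℝ) * θ ≠ a * (m : ℝ)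

/-- `P` is a stochastic matrix and `ν` is a positive invariant probability for it. -/
structure IsStochastic [Fintype X] (P : X → X → ℝ) (ν : X → ℝ) : Prop where
  nonneg : ∀ x x', 0 ≤ P x x'
  rowSum : ∀ x, ∑ x', P x x' = 1
  nuPos : ∀ x, 0 < ν x
  nuSum : ∑ x, ν x = 1
  nuInv : ∀ x', ∑ x, ν x * P x x' = ν x'

/-- Dual kernel `P*(x, x') = ν(x') P(x', x) / ν(x)`. -/
noncomputable def dualK (P : X → X → ℝ) (ν : X → ℝ) (x x' : X) : ℝ :=
  ν x' * P x' x / ν x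

/-- Sup norm of a function on a finite set. -/
noncomputable def supN [Fintype X] [Nonempty X] (ψ : X → ℝ) : ℝ := ⨆ x, |ψ x|

/-- Rayleigh density `φ₊(t) = t e^{-t²/2} 𝟙_{t ≥ 0}`. -/
noncomputable def rayleigh (t : ℝ) : ℝ := if 0 ≤ t then t * Real.exp (-t ^ 2 / 2) else 0

/-- Centred normal density with standard deviation `s`. -/
noncomputable def gauss (s u : ℝ) : ℝ :=
  Real.exp (-u ^ 2 / (2 * s ^ 2)) / (s * Real.sqrt (2 * π))

/-- Perturbed transition operator `P_t`, as a complex matrix. -/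
noncomputable def Pmat [Fintype X] (P : X → X → ℝ) (f : X → ℝ) (t : ℝ) : Matrix X X ℂ :=
  Matrix.of fun x x' => (P x x' : ℂ) * Complex.exp (Complex.I * (t : ℂ) * (f x' : ℂ))

/-- A complex matrix viewed as a continuous linear operator on `X → ℂ`
(equipped with the sup norm). -/
noncomputable def toCLM [Fintype X] (M : Matrix X X ℂ) : (X → ℂ) →L[ℂ] (X → ℂ) :=
  LinearMap.toContinuousLinearMap M.mulVecLin

/-- Fourier transform `ĥ(t) = ∫ e^{-i t u} h(u) du`. -/
noncomputable def FT (h : ℝ → ℝ) (t : ℝ) : ℂ :=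
  ∫ u : ℝ, Complex.exp (-(Complex.I * (t : ℂ) * (u : ℂ))) * (h u : ℂ)

/-- Convolution `(g ∗ k)(u) = ∫ g(v) k(u - v) dv`. -/
noncomputable def convR (g k : ℝ → ℝ) (u : ℝ) : ℝ := ∫ v : ℝ, g v * k (u - v)

/-- Stone's kernel `κ`. -/
noncomputable def kapp (u : ℝ) : ℝ :=
  if u = 0 then 1 / (2 * π) else (Real.sin (u / 2) / (u / 2)) ^ 2 / (2 * π)

/-- Scaled kernel `κ_δ(u) = κ(u/δ)/δ`. -/
noncomputable def kappD (δ u : ℝ) : ℝ := kapp (u / δ) / δ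

/-- Upper regularisation `h̄_ε(u) = sup_{v ∈ [u-ε, u+ε]} h(v)`. -/
noncomputable def upReg (h : ℝ → ℝ) (ε u : ℝ) : ℝ := sSup (h '' Set.Icc (u - ε) (u + ε))

/-- Lower regularisation `ẖ_ε(u) = inf_{v ∈ [u-ε, u+ε]} h(v)`. -/
noncomputable def loReg (h : ℝ → ℝ) (ε u : ℝ) : ℝ := sInf (h '' Set.Icc (u - ε) (u + ε))

/-- The class `𝓗_ε`: non-negative, locally bounded, with `h`, `h̄_ε`, `ẖ_ε`
measurable and Lebesgue integrable. -/
def MemH (ε : ℝ) (h : ℝ → ℝ) : Prop :=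
  (∀ u, 0 ≤ h u) ∧ (∀ K : Set ℝ, IsCompact K → BddAbove (h '' K)) ∧
  Measurable h ∧ Measurable (upReg h ε) ∧ Measurable (loReg h ε) ∧
  Integrable h ∧ Integrable (upReg h ε) ∧ Integrable (loReg h ε)


open scoped FourierTransform
open MeasureTheory Real Filter

lemma kapp_nonneg (u : ℝ) : 0 ≤ kapp u := by
  unfold kapp; split <;> positivity

lemma sin_div_sq_le_one (x : ℝ) : (Real.sin x / x) ^ 2 ≤ 1 := by
  rcases eq_or_ne x 0 with rfl | hx
  · simp
  · rw [div_pow, div_le_one (by positivity)]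
    have := Real.sin_sq_le_sq (x := x)
    linarith [sq_abs (Real.sin x), sq_abs x, Real.sin_sq_le_sq (x := x)]

lemma kapp_le (u : ℝ) : kapp u ≤ 1 / (2 * π) := by
  unfold kapp
  split
  · exact le_refl _
  · rw [div_le_div_iff_of_pos_right (by positivity)]  -- maybe wrong name
    exact sin_div_sq_le_one _

lemma kapp_neg (u : ℝ) : kapp (-u) = kapp u := by
  unfold kapp
  rcases eq_or_ne u 0 with rfl | hu
  · simp
  · rw [if_neg (by simpa using hu), if_neg hu, neg_div, Real.sin_neg, neg_div_neg_eq]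

lemma measurable_kapp : Measurable kapp := by
  apply Measurable.ite (MeasurableSet.singleton 0) measurable_const
  fun_prop


noncomputable def tri (x : ℝ) : ℂ := ((max (1 - |x|) 0 : ℝ) : ℂ)

lemma tri_cont : Continuous tri := by
  unfold tri; fun_prop

lemma tri_zero_of (x : ℝ) (hx : 1 ≤ |x|) : tri x = 0 := by
  unfold tri
  rw [max_eq_right (by linarith)]
  simp

lemma tri_integrable : Integrable tri := by
  apply Continuous.integrable_of_hasCompactSupport tri_cont
  apply HasCompactSupport.intro (isCompact_Icc (a := (-1:ℝ)) (b := 1))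
  intro x hx
  apply tri_zero_of
  simp only [Set.mem_Icc, not_and_or, not_le] at hx
  rcases hx with h | h
  · exact le_abs.2 (Or.inr (by linarith))
  · exact le_abs.2 (Or.inl h.le)

lemma Jval (c : ℂ) (hc : c ≠ 0) :
    ∫ x in (0:ℝ)..1, (1 - (x:ℂ)) * Complex.exp (c * x) =
      (Complex.exp c - 1 - c) / c ^ 2 := by
  have key : ∀ x : ℝ, HasDerivAt (fun y : ℝ => Complex.exp (c * y) * ((1 - y) / c + 1 / c ^ 2))
      ((1 - (x:ℂ)) * Complex.exp (c * x)) x := by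
    intro x
    have h1 : HasDerivAt (fun w : ℂ => Complex.exp (c * w) * ((1 - w) / c + 1 / c ^ 2))
        ((1 - (x:ℂ)) * Complex.exp (c * x)) (x:ℂ) := by
      have he : HasDerivAt (fun w : ℂ => Complex.exp (c * w)) (c * Complex.exp (c * (x:ℂ))) (x:ℂ) := by
        simpa [mul_comm] using ((hasDerivAt_id (x:ℂ)).const_mul c).cexp
      have hp : HasDerivAt (fun w : ℂ => (1 - w) / c + 1 / c ^ 2) (-1 / c) (x:ℂ) := by
        have h0 : HasDerivAt (fun w : ℂ => (1 - w)) (-1) (x:ℂ) := by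
          simpa using (hasDerivAt_id (x:ℂ)).const_sub 1
        exact (h0.div_const c).add_const (1 / c ^ 2)
      have := he.mul hp
      refine this.congr_deriv ?_
      field_simp
      ring
    exact h1.comp_ofReal
  rw [intervalIntegral.integral_eq_sub_of_hasDerivAt (fun x _ => key x) ?_]
  · rw [Complex.ofReal_one, Complex.ofReal_zero, mul_one, mul_zero, Complex.exp_zero]
    field_simp
    ring
  · apply Continuous.intervalIntegrable
    fun_prop

lemma sin_sq_half' (x : ℝ) : Real.sin (x / 2) ^ 2 = (1 - Real.cos x) / 2 := by
  have h1 := Real.cos_two_mul (x / 2)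
  rw [show 2 * (x / 2) = x by ring] at h1
  have h2 := Real.sin_sq_add_cos_sq (x / 2)
  linarith

lemma fourier_tri (ξ : ℝ) : 𝓕 tri ξ = ((2 * π * kapp (2 * π * ξ) : ℝ) : ℂ) := by
  rw [Real.fourier_real_eq_integral_exp_smul]
  have hsupp : ∀ v : ℝ, v ∉ Set.Ioc (-1:ℝ) 1 →
      Complex.exp (↑(-2 * π * v * ξ) * Complex.I) • tri v = 0 := by
    intro v hv
    rw [tri_zero_of v ?_, smul_zero]
    simp only [Set.mem_Ioc, not_and_or, not_lt, not_le] at hv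
    rcases hv with h | h
    · exact le_abs.2 (Or.inr (by linarith))
    · exact le_abs.2 (Or.inl h.le)
  rw [← setIntegral_eq_integral_of_forall_compl_eq_zero hsupp,
    ← intervalIntegral.integral_of_le (by norm_num : (-1:ℝ) ≤ 1)]
  set c : ℂ := -(2 * π * ξ : ℝ) * Complex.I with hc
  have hint : ∀ x : ℝ, Complex.exp (↑(-2 * π * x * ξ) * Complex.I) • tri x
      = tri x * Complex.exp (c * x) := by
    intro x
    rw [smul_eq_mul, mul_comm, hc]
    congr 2
    push_cast
    ring
  simp_rw [hint]
  have hcont1 : Continuous (fun x : ℝ => ((1:ℂ) + x) * Complex.exp (c * x)) := by fun_prop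
  have hcont2 : Continuous (fun x : ℝ => ((1:ℂ) - x) * Complex.exp (c * x)) := by fun_prop
  have hconttri : Continuous (fun x : ℝ => tri x * Complex.exp (c * x)) := by
    apply Continuous.mul tri_cont
    fun_prop
  have hsplit : (∫ x in (-1:ℝ)..1, tri x * Complex.exp (c * x)) =
      (∫ x in (-1:ℝ)..0, ((1:ℂ) + x) * Complex.exp (c * x)) +
      (∫ x in (0:ℝ)..1, ((1:ℂ) - x) * Complex.exp (c * x)) := by
    rw [← intervalIntegral.integral_add_adjacent_intervals (b := (0:ℝ))
      (hconttri.intervalIntegrable _ _) (hconttri.intervalIntegrable _ _)]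
    congr 1
    · apply intervalIntegral.integral_congr
      intro x hx
      rw [Set.uIcc_of_le (by norm_num : (-1:ℝ) ≤ 0), Set.mem_Icc] at hx
      have h1 : |x| = -x := abs_of_nonpos hx.2
      have h2 : (1 - |x|) ⊔ 0 = 1 + x := by rw [h1]; rw [max_eq_left (by linarith)]; ring
      simp only [tri, h2]
      push_cast
      ring
    · apply intervalIntegral.integral_congr
      intro x hx
      rw [Set.uIcc_of_le (by norm_num : (0:ℝ) ≤ 1), Set.mem_Icc] at hx
      have h1 : |x| = x := abs_of_nonneg hx.1
      have h2 : (1 - |x|) ⊔ 0 = 1 - x := by rw [h1]; exact max_eq_left (by linarith)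
      simp only [tri, h2]
      push_cast
      ring
  rw [hsplit]
  have hneg : (∫ x in (-1:ℝ)..0, ((1:ℂ) + x) * Complex.exp (c * x)) =
      ∫ x in (0:ℝ)..1, ((1:ℂ) - x) * Complex.exp (-c * x) := by
    rw [show (∫ x in (0:ℝ)..1, ((1:ℂ) - x) * Complex.exp (-c * x)) =
        ∫ x in (0:ℝ)..1, (fun y : ℝ => ((1:ℂ) + y) * Complex.exp (c * y)) (-x) from ?_]
    · rw [intervalIntegral.integral_comp_neg (fun y : ℝ => ((1:ℂ) + y) * Complex.exp (c * y))]
      norm_num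
    · apply intervalIntegral.integral_congr
      intro x _
      simp only
      push_cast
      ring_nf
  rw [hneg]
  rcases eq_or_ne ξ 0 with rfl | hξ
  · have hc0 : c = 0 := by rw [hc]; push_cast; ring
    rw [hc0]
    simp only [neg_zero, zero_mul, Complex.exp_zero, mul_one]
    have e1 : (∫ x in (0:ℝ)..1, ((1:ℂ) - x)) = (((∫ x in (0:ℝ)..1, (1 - x : ℝ)) : ℝ) : ℂ) := by
      rw [← intervalIntegral.integral_ofReal]
      apply intervalIntegral.integral_congr
      intro x _
      push_cast
      ring
    have e2 : (∫ x in (0:ℝ)..1, (1 - x : ℝ)) = 1 / 2 := by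
      rw [intervalIntegral.integral_sub intervalIntegrable_const
        (intervalIntegral.intervalIntegrable_id)]
      simp [integral_id]
      norm_num
    rw [e1, e2]
    unfold kapp
    norm_num
    field_simp
  · have ha : (2:ℝ) * π * ξ ≠ 0 := mul_ne_zero (mul_ne_zero two_ne_zero pi_ne_zero) hξ
    have hcne : c ≠ 0 := by
      rw [hc]
      intro hcon
      rw [neg_mul, neg_eq_zero, mul_eq_zero] at hcon
      rcases hcon with h | h
      · exact ha (by exact_mod_cast h)
      · exact Complex.I_ne_zero h
    rw [Jval c hcne, Jval (-c) (neg_ne_zero.2 hcne)]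
    unfold kapp
    rw [if_neg ha]
    have hcos : Complex.exp c + Complex.exp (-c) = 2 * Complex.cos (2 * π * ξ : ℝ) := by
      rw [Complex.cos, hc]
      push_cast
      ring_nf
    have hc2 : c ^ 2 = -((2 * π * ξ : ℝ) : ℂ) ^ 2 := by
      rw [hc]
      push_cast
      ring_nf
      rw [Complex.I_sq]
      ring
    rw [neg_sq, hc2]
    set z : ℂ := ((2 * π * ξ : ℝ) : ℂ) with hz
    have hzne : z ≠ 0 := by
      rw [hz]
      exact_mod_cast ha
    have hsum : (Complex.exp (-c) - 1 - -c) / -z ^ 2 + (Complex.exp c - 1 - c) / -z ^ 2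
        = (2 - (Complex.exp c + Complex.exp (-c))) / z ^ 2 := by
      rw [← add_div, div_neg, ← neg_div]
      ring_nf
    rw [hsum, hcos, ← Complex.ofReal_cos]
    have hreal : (2 - 2 * Real.cos (2 * π * ξ)) / (2 * π * ξ) ^ 2
        = 2 * π * ((Real.sin (2 * π * ξ / 2) / (2 * π * ξ / 2)) ^ 2 / (2 * π)) := by
      rw [div_pow, sin_sq_half']
      field_simp
    rw [← hreal, hz]
    push_cast
    ring

lemma kapp_le_bound (u : ℝ) : kapp u ≤ (1 / π) * (1 + (u / 2) ^ 2)⁻¹ := by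
  unfold kapp
  split
  · rename_i h
    subst h
    rw [show ((0:ℝ)/2) = 0 by norm_num]
    rw [div_le_iff₀ (by positivity)]
    rw [show 1 / π * (1 + 0 ^ 2)⁻¹ * (2 * π) = 2 * (π / π) by ring]
    rw [div_self pi_ne_zero]
    norm_num
  · rename_i h
    set x := u / 2 with hx
    have hx0 : x ≠ 0 := fun hc => h (by rw [hx] at hc; linarith)
    have hs1 : (Real.sin x / x) ^ 2 ≤ 1 := by
      rw [div_pow, div_le_one (by positivity)]
      nlinarith [Real.sin_sq_le_sq (x := x), sq_abs (Real.sin x), sq_abs x]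
    have hs2 : (Real.sin x / x) ^ 2 * x ^ 2 ≤ 1 := by
      rw [div_pow, div_mul_cancel₀ _ (by positivity)]
      nlinarith [Real.sin_le_one x, Real.neg_one_le_sin x]
    have h1 : (Real.sin x / x) ^ 2 ≤ 2 * (1 + x ^ 2)⁻¹ := by
      rw [le_mul_inv_iff₀ (by positivity)]
      nlinarith
    calc (Real.sin x / x) ^ 2 / (2 * π) ≤ (2 * (1 + x ^ 2)⁻¹) / (2 * π) := by
          gcongr
      _ = (1 / π) * (1 + x ^ 2)⁻¹ := by field_simp

lemma integrable_kapp : Integrable kapp := by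
  apply Integrable.mono' ((integrable_inv_one_add_sq.comp_div
    (two_ne_zero)).const_mul (1/π)) measurable_kapp.aestronglyMeasurable
  filter_upwards with u
  rw [Real.norm_eq_abs, abs_of_nonneg (kapp_nonneg u)]
  exact kapp_le_bound u

lemma integral_kapp : ∫ u : ℝ, kapp u = 1 := by
  have h2pi : (2 * π : ℝ) ≠ 0 := mul_ne_zero two_ne_zero pi_ne_zero
  have hK : Integrable (fun ξ : ℝ => 2 * π * kapp (2 * π * ξ)) :=
    (integrable_kapp.comp_mul_left' h2pi).const_mul _
  have hFTeq : 𝓕 tri = fun ξ : ℝ => ((2 * π * kapp (2 * π * ξ) : ℝ) : ℂ) := funext fourier_tri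
  have hFT : Integrable (𝓕 tri) := by rw [hFTeq]; exact hK.ofReal
  have hinv := tri_integrable.fourierInv_fourier_eq hFT (tri_cont.continuousAt (x := 0))
  rw [Real.fourierInv_eq] at hinv
  simp only [inner_zero_right, AddChar.map_zero_eq_one, one_smul] at hinv
  rw [hFTeq] at hinv
  have htri0 : tri 0 = 1 := by unfold tri; norm_num
  beta_reduce at hinv
  rw [htri0] at hinv
  have h2 : (∫ v : ℝ, ((2 * π * kapp (2 * π * v) : ℝ) : ℂ))
      = ((∫ v : ℝ, 2 * π * kapp (2 * π * v) : ℝ) : ℂ) := integral_ofReal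
  rw [h2] at hinv
  have hreal : ∫ ξ : ℝ, 2 * π * kapp (2 * π * ξ) = 1 := by exact_mod_cast hinv
  rw [integral_const_mul, MeasureTheory.Measure.integral_comp_mul_left kapp (2 * π)] at hreal
  rw [abs_of_nonneg (by positivity : (0:ℝ) ≤ (2 * π)⁻¹), smul_eq_mul] at hreal
  rw [show 2 * π * ((2 * π)⁻¹ * ∫ y : ℝ, kapp y) = (2 * π * (2 * π)⁻¹) * ∫ y : ℝ, kapp y
    by ring, mul_inv_cancel₀ h2pi, one_mul] at hreal
  exact hreal

lemma rpow_neg_two_eq (x : ℝ) : x ^ (-2 : ℝ) = (x ^ 2)⁻¹ := by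
  rw [show (-2 : ℝ) = ((-2 : ℤ) : ℝ) by norm_num, Real.rpow_intCast]
  rw [zpow_neg]
  norm_cast

lemma kapp_le_inv_sq {u : ℝ} (hu : u ≠ 0) : kapp u ≤ 2 / π * u ^ (-2 : ℝ) := by
  unfold kapp
  rw [if_neg hu, rpow_neg_two_eq]
  have h1 : Real.sin (u / 2) ^ 2 ≤ 1 := by
    nlinarith [Real.sin_le_one (u / 2), Real.neg_one_le_sin (u / 2)]
  have hu2 : (0:ℝ) < (u / 2) ^ 2 := pow_two_pos_of_ne_zero (div_ne_zero hu two_ne_zero)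
  have hu2' : (0:ℝ) < u ^ 2 := pow_two_pos_of_ne_zero hu
  rw [show 2 / π * (u ^ 2)⁻¹ = 2 / (π * u ^ 2) by rw [div_mul_eq_div_div_swap]; ring]
  rw [div_pow, div_div, div_le_div_iff₀ (by positivity) (by positivity)]
  have hq : ((u / 2 : ℝ)) ^ 2 = u ^ 2 / 4 := by ring
  nlinarith [hq, mul_le_mul_of_nonneg_right h1 (mul_pos pi_pos hu2').le]

lemma integral_tail_kapp {T : ℝ} (hT : 0 < T) :
    ∫ v in {v : ℝ | T ≤ |v|}, kapp v ≤ 4 / (π * T) := by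
  have hS : {v : ℝ | T ≤ |v|} = Set.Iic (-T) ∪ Set.Ici T := by
    ext v
    simp only [Set.mem_setOf_eq, Set.mem_union, Set.mem_Iic, Set.mem_Ici, le_abs]
    constructor
    · rintro (h | h)
      · exact Or.inr h
      · exact Or.inl (by linarith)
    · rintro (h | h)
      · exact Or.inr (by linarith)
      · exact Or.inl h
  have hdisj : Disjoint (Set.Iic (-T)) (Set.Ici T) := by
    rw [Set.Iic_disjoint_Ici]
    linarith
  have hIoi : IntegrableOn (fun x : ℝ => 2 / π * x ^ (-2 : ℝ)) (Set.Ioi T) := by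
    exact (integrableOn_Ioi_rpow_of_lt (by norm_num) hT).const_mul _
  have hIciInt : ∫ x in Set.Ici T, kapp x ≤ 2 / (π * T) := by
    calc ∫ x in Set.Ici T, kapp x = ∫ x in Set.Ioi T, kapp x := by
          rw [integral_Ici_eq_integral_Ioi]
      _ ≤ ∫ x in Set.Ioi T, 2 / π * x ^ (-2 : ℝ) := by
          apply setIntegral_mono_on integrable_kapp.integrableOn hIoi measurableSet_Ioi
          intro x hx
          exact kapp_le_inv_sq (by rintro rfl; exact absurd hx (by simpa using hT.le))
      _ = 2 / π * ∫ x in Set.Ioi T, x ^ (-2 : ℝ) := by rw [integral_const_mul]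
      _ = 2 / (π * T) := by
          rw [integral_Ioi_rpow_of_lt (by norm_num) hT]
          norm_num
          rw [Real.rpow_neg_one]
          field_simp
  have hIicInt : ∫ x in Set.Iic (-T), kapp x = ∫ x in Set.Ici T, kapp x := by
    have h := integral_comp_neg_Iic (-T) kapp
    simp only [kapp_neg, neg_neg] at h
    rw [h, ← integral_Ici_eq_integral_Ioi]
  rw [hS, setIntegral_union hdisj measurableSet_Ici integrable_kapp.integrableOn
    integrable_kapp.integrableOn, hIicInt]
  have h2 : 0 < π * T := by positivity
  rw [show 4 / (π * T) = 2 / (π * T) + 2 / (π * T) by ring]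
  gcongr


lemma kappD_inner_bound {ε : ℝ} (hε : 0 < ε) :
    1 - 4 * ε / π ≤ ∫ v in Set.Ioo (-ε) ε, kappD (ε ^ 2) v := by
  have hδ : (0:ℝ) < ε ^ 2 := by positivity
  have hT : (0:ℝ) < 1 / ε := by positivity
  have h1 : ∫ v in Set.Ioo (-ε) ε, kappD (ε ^ 2) v
      = ∫ w in Set.Ioo (-(1/ε)) (1/ε), kapp w := by
    rw [← integral_Ioc_eq_integral_Ioo, ← integral_Ioc_eq_integral_Ioo,
      ← intervalIntegral.integral_of_le (by linarith : -ε ≤ ε),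
      ← intervalIntegral.integral_of_le (by linarith : -(1/ε) ≤ 1/ε)]
    unfold kappD
    rw [intervalIntegral.integral_div]
    rw [intervalIntegral.integral_comp_div (c := ε ^ 2) kapp hδ.ne']
    rw [show -ε / ε ^ 2 = -(1/ε) by field_simp, show ε / ε ^ 2 = 1/ε by field_simp]
    rw [smul_eq_mul, mul_comm, mul_div_assoc, div_self hδ.ne', mul_one]
  rw [h1]
  have hSm : MeasurableSet {v : ℝ | 1/ε ≤ |v|} :=
    measurableSet_le measurable_const measurable_abs
  have hcompl : {v : ℝ | 1/ε ≤ |v|}ᶜ = Set.Ioo (-(1/ε)) (1/ε) := by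
    ext v
    simp [abs_lt]
  have hadd := integral_add_compl hSm integrable_kapp
  rw [integral_kapp, hcompl] at hadd
  have htail := integral_tail_kapp hT
  have h4 : 4 / (π * (1/ε)) = 4 * ε / π := by
    field_simp
  rw [h4] at htail
  linarith

section Reg
variable {h : ℝ → ℝ} {ε u v : ℝ}

lemma loReg_nonneg (h0 : ∀ x, 0 ≤ h x) (hε : 0 ≤ ε) (u : ℝ) : 0 ≤ loReg h ε u := by
  apply le_csInf
  · exact (Set.nonempty_Icc.2 (by linarith)).image h
  · rintro b ⟨x, -, rfl⟩
    exact h0 x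

lemma upReg_nonneg (h0 : ∀ x, 0 ≤ h x)
    (hbdd : ∀ K : Set ℝ, IsCompact K → BddAbove (h '' K)) (hε : 0 ≤ ε) (u : ℝ) :
    0 ≤ upReg h ε u := by
  have hmem : u ∈ Set.Icc (u - ε) (u + ε) := by constructor <;> linarith
  exact le_trans (h0 u) (le_csSup (hbdd _ isCompact_Icc) ⟨u, hmem, rfl⟩)

lemma loReg_le (h0 : ∀ x, 0 ≤ h x) (hv : |v| ≤ ε) : loReg h ε (u - v) ≤ h u := by
  rw [abs_le] at hv
  have hmem : u ∈ Set.Icc (u - v - ε) (u - v + ε) := by constructor <;> linarith [hv.1, hv.2]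
  exact csInf_le ⟨0, by rintro b ⟨x, -, rfl⟩; exact h0 x⟩ ⟨u, hmem, rfl⟩

lemma le_upReg (hbdd : ∀ K : Set ℝ, IsCompact K → BddAbove (h '' K)) (hv : |v| ≤ ε) :
    h u ≤ upReg h ε (u - v) := by
  rw [abs_le] at hv
  have hmem : u ∈ Set.Icc (u - v - ε) (u - v + ε) := by constructor <;> linarith [hv.1, hv.2]
  exact le_csSup (hbdd _ isCompact_Icc) ⟨u, hmem, rfl⟩

end Reg

lemma convR_eq (g k : ℝ → ℝ) (u : ℝ) : convR g k u = ∫ v : ℝ, g (u - v) * k v := by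
  unfold convR
  rw [← integral_sub_left_eq_self (fun v => g v * k (u - v)) volume u]
  congr 1
  ext v
  rw [sub_sub_cancel]


/-- Lemma 5.2: smoothing inequalities. -/
theorem smoothing_inequalities :
    ∀ ε ∈ Set.Ioo (0 : ℝ) (1 / 4), ∀ h : ℝ → ℝ, MemH ε h → ∀ u : ℝ,
      convR (loReg h ε) (kappD (ε ^ 2)) u -
          (∫ v in {v : ℝ | ε ≤ |v|}, loReg h ε (u - v) * kappD (ε ^ 2) v) ≤ h u ∧
        h u ≤ (1 + 4 * ε) * convR (upReg h ε) (kappD (ε ^ 2)) u := by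
  rintro ε ⟨hε0, hε4⟩ h ⟨h0, hbdd, hm, hmu, hml, hint, hintu, hintl⟩ u
  set δ := ε ^ 2 with hδdef
  have hδ : (0:ℝ) < δ := by positivity
  have hkm : Measurable (kappD δ) := (measurable_kapp.comp (measurable_id.div_const δ)).div_const δ
  have hknn : ∀ v, 0 ≤ kappD δ v := fun v => div_nonneg (kapp_nonneg _) hδ.le
  have hkbd : ∀ v, ‖kappD δ v‖ ≤ 1 / (2 * π) / δ := by
    intro v
    rw [Real.norm_eq_abs, abs_of_nonneg (hknn v)]
    unfold kappD
    gcongr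
    exact kapp_le _
  have hkint : Integrable (kappD δ) := (integrable_kapp.comp_div hδ.ne').div_const δ
  have hkI : ∫ v : ℝ, kappD δ v = 1 := by
    unfold kappD
    rw [integral_div, MeasureTheory.Measure.integral_comp_div kapp δ, abs_of_pos hδ,
      smul_eq_mul, integral_kapp, mul_one, div_self hδ.ne']
  have hprod : ∀ g : ℝ → ℝ, Integrable g → Integrable (fun v => g (u - v) * kappD δ v) := by
    intro g hgi
    have := Integrable.bdd_mul (hgi.comp_sub_left u) hkm.aestronglyMeasurable
      (Eventually.of_forall hkbd)
    simpa [mul_comm] using this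
  have hSm : MeasurableSet {v : ℝ | ε ≤ |v|} := measurableSet_le measurable_const measurable_abs
  have hcompl : {v : ℝ | ε ≤ |v|}ᶜ = Set.Ioo (-ε) ε := by
    ext v
    simp [abs_lt]
  constructor
  · -- lower bound
    have hconv : convR (loReg h ε) (kappD δ) u = ∫ v : ℝ, loReg h ε (u - v) * kappD δ v :=
      convR_eq _ _ u
    have hadd := integral_add_compl hSm (hprod _ hintl)
    rw [hcompl] at hadd
    have hmono : ∫ v in Set.Ioo (-ε) ε, loReg h ε (u - v) * kappD δ v
        ≤ ∫ v in Set.Ioo (-ε) ε, h u * kappD δ v := by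
      apply setIntegral_mono_on ((hprod _ hintl).integrableOn)
        ((hkint.const_mul (h u)).integrableOn) measurableSet_Ioo
      intro v hv
      have hvle : |v| ≤ ε := by
        rw [abs_le]
        exact ⟨(Set.mem_Ioo.1 hv).1.le, (Set.mem_Ioo.1 hv).2.le⟩
      exact mul_le_mul_of_nonneg_right (loReg_le h0 hvle) (hknn v)
    have hlast : ∫ v in Set.Ioo (-ε) ε, h u * kappD δ v ≤ h u := by
      rw [integral_const_mul]
      calc h u * ∫ v in Set.Ioo (-ε) ε, kappD δ v ≤ h u * ∫ v : ℝ, kappD δ v := by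
            apply mul_le_mul_of_nonneg_left _ (h0 u)
            exact setIntegral_le_integral hkint (Eventually.of_forall hknn)
        _ = h u := by rw [hkI, mul_one]
    rw [hconv]
    linarith
  · -- upper bound
    have hconv : convR (upReg h ε) (kappD δ) u = ∫ v : ℝ, upReg h ε (u - v) * kappD δ v :=
      convR_eq _ _ u
    have hψnn : ∀ v, 0 ≤ upReg h ε (u - v) * kappD δ v := fun v =>
      mul_nonneg (upReg_nonneg h0 hbdd hε0.le _) (hknn v)
    have hstep1 : ∫ v in Set.Ioo (-ε) ε, h u * kappD δ v
        ≤ ∫ v in Set.Ioo (-ε) ε, upReg h ε (u - v) * kappD δ v := by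
      apply setIntegral_mono_on ((hkint.const_mul (h u)).integrableOn)
        ((hprod _ hintu).integrableOn) measurableSet_Ioo
      intro v hv
      have hvle : |v| ≤ ε := by
        rw [abs_le]
        exact ⟨(Set.mem_Ioo.1 hv).1.le, (Set.mem_Ioo.1 hv).2.le⟩
      exact mul_le_mul_of_nonneg_right (le_upReg hbdd hvle) (hknn v)
    have hstep2 : ∫ v in Set.Ioo (-ε) ε, upReg h ε (u - v) * kappD δ v
        ≤ ∫ v : ℝ, upReg h ε (u - v) * kappD δ v :=
      setIntegral_le_integral (hprod _ hintu) (Eventually.of_forall hψnn)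
    have hinner := kappD_inner_bound hε0
    rw [← hδdef] at hinner
    have hIpos : ∫ v in Set.Ioo (-ε) ε, h u * kappD δ v
        = h u * ∫ v in Set.Ioo (-ε) ε, kappD δ v := integral_const_mul _ _
    have hπ : 1 + 4 * ε < π := by
      nlinarith [pi_gt_three]
    have hkey : h u ≤ (1 + 4 * ε) * ∫ v in Set.Ioo (-ε) ε, h u * kappD δ v := by
      rw [hIpos]
      have hI1 : 1 - 4 * ε / π ≤ ∫ v in Set.Ioo (-ε) ε, kappD δ v := hinner
      have hfac : 1 ≤ (1 + 4 * ε) * (1 - 4 * ε / π) := by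
        have hd : (1 + 4 * ε) * (4 * ε) / π ≤ 4 * ε := by
          rw [div_le_iff₀ pi_pos]
          nlinarith
        have hexp : (1 + 4 * ε) * (1 - 4 * ε / π)
            = 1 + 4 * ε - (1 + 4 * ε) * (4 * ε) / π := by ring
        linarith [hd, hexp]
      calc h u = h u * 1 := (mul_one _).symm
        _ ≤ h u * ((1 + 4 * ε) * (1 - 4 * ε / π)) := mul_le_mul_of_nonneg_left hfac (h0 u)
        _ ≤ h u * ((1 + 4 * ε) * ∫ v in Set.Ioo (-ε) ε, kappD δ v) := by
            apply mul_le_mul_of_nonneg_left _ (h0 u)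
            apply mul_le_mul_of_nonneg_left hI1 (by linarith)
        _ = (1 + 4 * ε) * (h u * ∫ v in Set.Ioo (-ε) ε, kappD δ v) := by ring
    rw [hconv]
    calc h u ≤ (1 + 4 * ε) * ∫ v in Set.Ioo (-ε) ε, h u * kappD δ v := hkey
      _ ≤ (1 + 4 * ε) * ∫ v in Set.Ioo (-ε) ε, upReg h ε (u - v) * kappD δ v := by
          apply mul_le_mul_of_nonneg_left hstep1 (by linarith)
      _ ≤ (1 + 4 * ε) * ∫ v : ℝ, upReg h ε (u - v) * kappD δ v := by
          apply mul_le_mul_of_nonneg_left hstep2 (by linarith)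
end CLLT
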